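/- Let S and T be left cancellative monoids and let S × T be their direct product monoid. Then S × T is strongly C*-regular if and only if both S and T are strongly C*-regular. -/

import Mathlib

open scoped Classical

namespace SgC

variable {M : Type*}

/-- Composition of partial maps (`g` after `f`). -/
def pcomp (g f : M → Option M) : M → Option M := fun s => (f s).bind g

/-- The canonical partial inverse of a partial map (the genuine inverse when the map
is injective on its domain, as is the case for all maps in the left inverse hull of a
left cancellative monoid). -/
noncomputable def pinv (f : M → Option M) : M → Option M :=
  fun t => if h : ∃ s, f s = some t then some h.choose else none

/-- Left translation `t ↦ s * t` as an everywhere-defined partial map. -/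
def ptransl [Mul M] (s : M) : M → Option M := fun t => some (s * t)

/-- The identity partial map. -/
def pid : M → Option M := fun s => some s

/-- The block `q⁻¹ ∘ p`: first multiply on the left by `p`, then remove `q` on the left. -/
noncomputable def pblock [Mul M] (p : M × M) : M → Option M :=
  pcomp (pinv (ptransl p.2)) (ptransl p.1)

/-- Membership in the left inverse hull `I_ℓ(M)`: `h` is of the form
`s₂ₙ⁻¹ s₂ₙ₋₁ ⋯ s₂⁻¹ s₁` for some `n ≥ 1` and `sᵢ ∈ M` (the list records the pairs
`(s₁,s₂), (s₃,s₄), …`, applied left to right). -/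
def InInvHull [Mul M] (h : M → Option M) : Prop :=
  ∃ l : List (M × M), l ≠ [] ∧
    h = l.foldl (fun acc p => pcomp (pblock p) acc) pid

/-- Membership in the inverse hull generated by translations by elements of `σ` only
(used for canonical copies of `I_ℓ(S)` inside partial maps of a larger monoid). -/
def InInvHullOn [Mul M] (σ : Set M) (h : M → Option M) : Prop :=
  ∃ l : List (M × M), l ≠ [] ∧ (∀ p ∈ l, p.1 ∈ σ ∧ p.2 ∈ σ) ∧
    h = l.foldl (fun acc p => pcomp (pblock p) acc) pid

/-- Domain of a partial map. -/
def pdom (h : M → Option M) : Set M := {s | h s ≠ none}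

/-- `h` fixes the set `Y` pointwise (in particular `Y ⊆ dom h`). -/
def PFixes (h : M → Option M) (Y : Set M) : Prop := ∀ s ∈ Y, h s = some s

/-- Preimage of a set under a partial map. -/
def ppre (h : M → Option M) (X : Set M) : Set M := {s | ∃ x ∈ X, h s = some x}

/-- Constructible right ideals: domains of elements of the left inverse hull. -/
def IsConstructible [Mul M] (X : Set M) : Prop := ∃ h, InInvHull h ∧ X = pdom h

/-- Membership in `J̄(S)`: sets of the form `X₀` or `X₀ ∖ (X₁ ∪ ⋯ ∪ Xₘ)` with all
`Xᵢ` constructible. -/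
def IsConstructibleBar [Mul M] (X : Set M) : Prop :=
  ∃ (X₀ : Set M) (m : ℕ) (Xi : Fin m → Set M),
    IsConstructible X₀ ∧ (∀ i, IsConstructible (Xi i)) ∧ X = X₀ \ ⋃ i, Xi i

/-- `Xi` is a foundation family for `X`: each `Xi i ⊆ X` and every nonempty
constructible right ideal contained in `X` intersects some `Xi i`. -/
def IsFoundation [Mul M] (X : Set M) {ι : Type*} (Xi : ι → Set M) : Prop :=
  (∀ i, Xi i ⊆ X) ∧
  ∀ Y : Set M, IsConstructible Y → Y.Nonempty → Y ⊆ X → ∃ i, (Y ∩ Xi i).Nonempty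

/-- Strong C*-regularity. -/
def StronglyRegular (M : Type*) [Monoid M] : Prop :=
  ∀ (n : ℕ) (h : Fin n → M → Option M), (∀ k, InInvHull (h k)) →
  ∀ (m : ℕ) (X : Set M) (Xi : Fin m → Set M),
    IsConstructible X → (∀ i, IsConstructible (Xi i)) →
    (X \ ⋃ i, Xi i).Nonempty →
    (X \ ⋃ i, Xi i) ⊆ ⋃ k, {s | h k s = some s} →
    ∃ (l : ℕ) (Y : Fin l → Set M) (kk : Fin l → Fin n),
      (∀ j, IsConstructible (Y j)) ∧
      (X \ ⋃ i, Xi i) ⊆ ⋃ j, Y j ∧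
      ∀ j, PFixes (h (kk j)) (Y j)

/-- C*-regularity. -/
def Regular (M : Type*) [Monoid M] : Prop :=
  ∀ (n : ℕ) (h : Fin n → M → Option M), (∀ k, InInvHull (h k)) →
  ∀ X : Set M, IsConstructibleBar X → X.Nonempty →
    X ⊆ ⋃ k, {s | h k s = some s} →
    ∃ (l : ℕ) (Y : Fin l → Set M) (kk : Fin l → Fin n),
      (∀ j, IsConstructibleBar (Y j)) ∧ X ⊆ ⋃ j, Y j ∧
      ∀ j, PFixes (h (kk j)) (Y j)

/-- Strong C*-regularity on the boundary. -/
def StronglyRegularOnBoundary (M : Type*) [Monoid M] : Prop :=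
  ∀ (n : ℕ) (h : Fin n → M → Option M), (∀ k, InInvHull (h k)) →
  ∀ (m : ℕ) (X : Set M) (Xi : Fin m → Set M),
    IsConstructible X → (∀ i, IsConstructible (Xi i)) → (∀ i, Xi i ⊆ X) →
    (X \ ⋃ i, Xi i).Nonempty →
    (X \ ⋃ i, Xi i) ⊆ ⋃ k, {s | h k s = some s} →
    ∃ (l : ℕ) (Y : Fin l → Set M) (kk : Fin l → Fin n),
      (∀ j, IsConstructible (Y j)) ∧ (∀ j, PFixes (h (kk j)) (Y j)) ∧
      IsFoundation X (Sum.elim Xi Y)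

/-- C*-regularity on the boundary. -/
def RegularOnBoundary (M : Type*) [Monoid M] : Prop :=
  ∀ (n : ℕ) (h : Fin n → M → Option M), (∀ k, InInvHull (h k)) →
  ∀ (m : ℕ) (X : Set M) (Xi : Fin m → Set M),
    IsConstructible X → (∀ i, IsConstructible (Xi i)) → (∀ i, Xi i ⊆ X) →
    (X \ ⋃ i, Xi i).Nonempty →
    (X \ ⋃ i, Xi i) ⊆ ⋃ k, {s | h k s = some s} →
    ∃ (l : ℕ) (Y : Fin l → Set M) (kk : Fin l → Fin n),
      (∀ j, IsConstructibleBar (Y j)) ∧ (∀ j, PFixes (h (kk j)) (Y j)) ∧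
      IsFoundation X (Sum.elim Xi Y)

/-- The type of constructible right ideals `J(M)`. -/
def CIdeal (M : Type*) [Mul M] : Type _ := {X : Set M // IsConstructible X}

/-- The character space `{0,1}^{J(M)}` with the topology of pointwise convergence. -/
abbrev CharSpace (M : Type*) [Mul M] : Type _ := CIdeal M → Bool

/-- The principal character `χ_s`. -/
noncomputable def princhar [Mul M] (s : M) : CharSpace M :=
  fun X => decide (s ∈ X.1)

/-- `Ω(M)`: the closure of the set of principal characters. -/
noncomputable def Omega (M : Type*) [Mul M] : Set (CharSpace M) :=
  closure (Set.range (princhar : M → CharSpace M))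

/-- Filters on `J(M)`: nonempty collections of nonempty constructible ideals closed
under intersections and enlargements within `J(M)`. -/
def IsFilterOn [Mul M] (F : Set (CIdeal M)) : Prop :=
  F.Nonempty ∧ (∀ X ∈ F, (X.1 : Set M).Nonempty) ∧
  (∀ X ∈ F, ∀ Y ∈ F, ∀ Z : CIdeal M, Z.1 = X.1 ∩ Y.1 → Z ∈ F) ∧
  (∀ X ∈ F, ∀ Y : CIdeal M, X.1 ⊆ Y.1 → Y ∈ F)

/-- Nonzero multiplicative `{0,1}`-valued maps on `J(M)`. -/
def IsChar [Mul M] (χ : CharSpace M) : Prop :=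
  (∃ X, χ X = true) ∧
  ∀ X Y Z : CIdeal M, Z.1 = X.1 ∩ Y.1 → χ Z = (χ X && χ Y)

/-- Maximal characters: characters whose associated filter is maximal among filters. -/
def IsMaximalChar [Mul M] (χ : CharSpace M) : Prop :=
  IsChar χ ∧ IsFilterOn {X | χ X = true} ∧
  ∀ G : Set (CIdeal M), IsFilterOn G → {X | χ X = true} ⊆ G → G = {X | χ X = true}

/-- The set of maximal characters `Ω_max(M)`. -/
def OmegaMax (M : Type*) [Mul M] : Set (CharSpace M) := {χ | IsMaximalChar χ}

/-- The boundary `∂Ω(M)`: the closure of the set of maximal characters. -/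
noncomputable def BoundaryOmega (M : Type*) [Mul M] : Set (CharSpace M) :=
  closure (OmegaMax M)


set_option linter.unusedSectionVars false

/-! ### Basic lemmas -/

/-- Partial injectivity. -/
def PInj (h : M → Option M) : Prop := ∀ ⦃s s' t : M⦄, h s = some t → h s' = some t → s = s'

lemma pext {α β : Type*} {F G : α → Option β}
    (h : ∀ x y, F x = some y ↔ G x = some y) : F = G := by
  funext x
  cases hF : F x with
  | none =>
    cases hG : G x with
    | none => rfl
    | some y => exact absurd ((h x y).2 hG) (by simp [hF])
  | some y => rw [(h x y).1 hF]

lemma pcomp_assoc (f g h : M → Option M) :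
    pcomp h (pcomp g f) = pcomp (pcomp h g) f := by
  funext s; simp [pcomp, Option.bind_assoc]; rfl

@[simp] lemma pcomp_pid_left (f : M → Option M) : pcomp pid f = f := by
  funext s; cases h : f s <;> simp [pcomp, pid, h]

@[simp] lemma pcomp_pid_right (f : M → Option M) : pcomp f pid = f := by
  funext s; simp [pcomp, pid]

lemma pinv_some_iff {h : M → Option M} (hi : PInj h) {t s : M} :
    pinv h t = some s ↔ h s = some t := by
  constructor
  · intro he
    unfold pinv at he
    split at he
    · next hex => cases he; exact hex.choose_spec
    · exact absurd he (by simp)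
  · intro he
    have hex : ∃ s, h s = some t := ⟨s, he⟩
    unfold pinv
    rw [dif_pos hex]
    exact congrArg some (hi hex.choose_spec he)

lemma PInj.pinv {h : M → Option M} (hi : PInj h) : PInj (pinv h) := by
  intro t t' s h1 h2
  have a := (pinv_some_iff hi).1 h1
  have b := (pinv_some_iff hi).1 h2
  rw [a] at b
  exact Option.some_injective _ b

lemma PInj.pcomp {f g : M → Option M} (hf : PInj f) (hg : PInj g) : PInj (pcomp g f) := by
  intro s s' t h1 h2
  simp only [SgC.pcomp, Option.bind_eq_some_iff] at h1 h2
  obtain ⟨u, hu1, hu2⟩ := h1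
  obtain ⟨u', hu1', hu2'⟩ := h2
  exact hf hu1 (by rwa [hg hu2' hu2] at hu1')

lemma PInj.pid : PInj (pid : M → Option M) := by
  intro s s' t h1 h2
  exact Option.some_injective _ (h1.trans h2.symm)

lemma pinv_pid : pinv (pid : M → Option M) = pid := by
  apply pext
  intro t s
  rw [pinv_some_iff PInj.pid]
  simp only [SgC.pid, Option.some.injEq]
  exact eq_comm

lemma pinv_pcomp {f g : M → Option M} (hf : PInj f) (hg : PInj g) :
    pinv (pcomp g f) = pcomp (pinv f) (pinv g) := by
  apply pext
  intro t s
  rw [pinv_some_iff (hf.pcomp hg)]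
  simp only [pcomp, Option.bind_eq_some_iff]
  constructor
  · rintro ⟨u, hu1, hu2⟩
    exact ⟨u, (pinv_some_iff hg).2 hu2, (pinv_some_iff hf).2 hu1⟩
  · rintro ⟨u, hu1, hu2⟩
    exact ⟨u, (pinv_some_iff hf).1 hu2, (pinv_some_iff hg).1 hu1⟩

section Mul

variable [Mul M] [IsLeftCancelMul M]

lemma PInj.ptransl (a : M) : PInj (ptransl a) := by
  intro s s' t h1 h2
  simp only [SgC.ptransl, Option.some.injEq] at h1 h2
  exact mul_left_cancel (h1.trans h2.symm)

lemma pblock_some_iff {a b s u : M} : pblock (a, b) s = some u ↔ b * u = a * s := by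
  show (ptransl a s).bind (pinv (ptransl b)) = some u ↔ _
  simp only [SgC.ptransl, Option.bind_some]
  rw [pinv_some_iff (PInj.ptransl b)]
  simp [SgC.ptransl]

lemma PInj.pblock (p : M × M) : PInj (pblock p) := by
  obtain ⟨a, b⟩ := p
  intro s s' t h1 h2
  rw [pblock_some_iff] at h1 h2
  exact mul_left_cancel (h1.symm.trans h2 : a * s = a * s')

lemma pinv_pblock (p : M × M) : pinv (pblock p) = pblock p.swap := by
  obtain ⟨a, b⟩ := p
  apply pext
  intro u s
  rw [pinv_some_iff (PInj.pblock (a,b))]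
  show pblock (a, b) s = some u ↔ pblock (b, a) u = some s
  rw [pblock_some_iff, pblock_some_iff]
  exact eq_comm

end Mul

/-! ### folds -/

section Fold

variable [Mul M]

noncomputable def pfoldl (l : List (M × M)) : M → Option M :=
  l.foldl (fun acc p => pcomp (pblock p) acc) pid

lemma InInvHull_iff {h : M → Option M} :
    InInvHull h ↔ ∃ l : List (M × M), l ≠ [] ∧ h = pfoldl l := Iff.rfl

lemma foldl_acc (l : List (M × M)) (acc : M → Option M) :
    l.foldl (fun acc p => pcomp (pblock p) acc) acc = pcomp (pfoldl l) acc := by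
  induction l generalizing acc with
  | nil => simp [pfoldl]
  | cons p l ih =>
    show l.foldl _ (pcomp (pblock p) acc) = pcomp (pfoldl (p :: l)) acc
    rw [ih (pcomp (pblock p) acc)]
    have hc : pfoldl (p :: l) = pcomp (pfoldl l) (pblock p) := by
      show l.foldl _ (pcomp (pblock p) pid) = _
      rw [ih (pcomp (pblock p) pid), pcomp_pid_right]
    rw [hc, pcomp_assoc]

lemma pfoldl_append (l1 l2 : List (M × M)) :
    pfoldl (l1 ++ l2) = pcomp (pfoldl l2) (pfoldl l1) := by
  show List.foldl _ pid (l1 ++ l2) = _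
  rw [List.foldl_append]
  exact foldl_acc l2 _

lemma pfoldl_concat (l : List (M × M)) (p : M × M) :
    pfoldl (l ++ [p]) = pcomp (pblock p) (pfoldl l) := by
  rw [pfoldl_append, show pfoldl [p] = pblock p from pcomp_pid_right _]

lemma pfoldl_cons (p : M × M) (l : List (M × M)) :
    pfoldl (p :: l) = pcomp (pfoldl l) (pblock p) := by
  show List.foldl _ (pcomp (pblock p) pid) l = _
  rw [foldl_acc, pcomp_pid_right]

lemma InInvHull.pcomp {f g : M → Option M} (hf : InInvHull f) (hg : InInvHull g) :
    InInvHull (pcomp g f) := by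
  obtain ⟨l1, h1, rfl⟩ := hf
  obtain ⟨l2, h2, rfl⟩ := hg
  exact ⟨l1 ++ l2, by simp [h1], (pfoldl_append l1 l2).symm⟩

variable [IsLeftCancelMul M]

lemma PInj.pfoldl (l : List (M × M)) : PInj (pfoldl l) := by
  induction l with
  | nil => exact PInj.pid
  | cons p l ih => rw [pfoldl_cons]; exact (PInj.pblock p).pcomp ih

lemma InInvHull.pinj {h : M → Option M} (hh : InInvHull h) : PInj h := by
  obtain ⟨l, -, rfl⟩ := hh; exact PInj.pfoldl l

lemma pinv_pfoldl (l : List (M × M)) :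
    pinv (pfoldl l) = pfoldl ((l.map Prod.swap).reverse) := by
  induction l using List.reverseRecOn with
  | nil => simpa [pfoldl] using pinv_pid
  | append_singleton l p ih =>
    rw [pfoldl_concat, pinv_pcomp (PInj.pfoldl l) (PInj.pblock p), ih, pinv_pblock]
    rw [List.map_append, List.reverse_append]
    simp only [List.map_cons, List.map_nil, List.reverse_cons, List.reverse_nil,
      List.nil_append, List.singleton_append]
    rw [pfoldl_cons]

lemma InInvHull.pinv {h : M → Option M} (hh : InInvHull h) : InInvHull (SgC.pinv h) := by
  obtain ⟨l, hl, rfl⟩ := hh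
  exact ⟨_, by simpa using hl, pinv_pfoldl l⟩

lemma pcomp_pinv_self {h : M → Option M} (hi : PInj h) {s : M} (hs : s ∈ pdom h) :
    pcomp (pinv h) h s = some s := by
  simp only [pdom, Set.mem_setOf_eq] at hs
  cases he : h s with
  | none => exact absurd he hs
  | some t => simp [pcomp, he, (pinv_some_iff hi).2 he]

lemma pcomp_pinv_self_none {h : M → Option M} {s : M} (hs : s ∉ pdom h) :
    pcomp (pinv h) h s = none := by
  simp only [pdom, Set.mem_setOf_eq, not_not] at hs
  simp [pcomp, hs]

lemma IsConstructible.inter {X Y : Set M} (hX : IsConstructible X) (hY : IsConstructible Y) :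
    IsConstructible (X ∩ Y) := by
  obtain ⟨hx, hhx, rfl⟩ := hX
  obtain ⟨hy, hhy, rfl⟩ := hY
  refine ⟨pcomp (pcomp (pinv hx) hx) (pcomp (pinv hy) hy),
    (hhy.pcomp hhy.pinv).pcomp (hhx.pcomp hhx.pinv), ?_⟩
  ext s
  simp only [Set.mem_inter_iff, pdom, Set.mem_setOf_eq]
  by_cases hsy : s ∈ pdom hy
  · rw [show (pcomp (pcomp (pinv hx) hx) (pcomp (pinv hy) hy)) s
        = (pcomp (pinv hy) hy s).bind (pcomp (pinv hx) hx) from rfl,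
      pcomp_pinv_self hhy.pinj hsy, Option.bind_some]
    by_cases hsx : s ∈ pdom hx
    · rw [pcomp_pinv_self hhx.pinj hsx]
      simp only [pdom, Set.mem_setOf_eq] at hsx hsy
      simp [hsx, hsy]
    · rw [pcomp_pinv_self_none hsx]
      simp only [pdom, Set.mem_setOf_eq, not_not] at hsx
      simp [hsx]
  · rw [show (pcomp (pcomp (pinv hx) hx) (pcomp (pinv hy) hy)) s
        = (pcomp (pinv hy) hy s).bind (pcomp (pinv hx) hx) from rfl,
      pcomp_pinv_self_none hsy, Option.bind_none]
    simp only [pdom, Set.mem_setOf_eq, not_not] at hsy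
    simp [hsy]

end Fold

/-! ### Products -/

section Product

variable {S T : Type*}

def pprod (f : S → Option S) (g : T → Option T) : S × T → Option (S × T) :=
  fun x => (f x.1).bind fun s' => (g x.2).map fun t' => (s', t')

lemma pprod_eq_some {f : S → Option S} {g : T → Option T} {x y : S × T} :
    pprod f g x = some y ↔ f x.1 = some y.1 ∧ g x.2 = some y.2 := by
  obtain ⟨y1, y2⟩ := y
  cases hf : f x.1 <;> cases hg : g x.2 <;>
    simp [pprod, hf, hg, Prod.ext_iff, and_comm, eq_comm]

lemma pcomp_pprod (f1 g1 : S → Option S) (f2 g2 : T → Option T) :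
    pcomp (pprod g1 g2) (pprod f1 f2) = pprod (pcomp g1 f1) (pcomp g2 f2) := by
  funext x
  cases hf : f1 x.1 <;> cases hg : f2 x.2 <;> simp [pprod, pcomp, hf, hg]

lemma pid_pprod : (pid : S × T → Option (S × T)) = pprod pid pid := by
  funext x; simp [pid, pprod]

lemma pdom_pprod (f : S → Option S) (g : T → Option T) :
    pdom (pprod f g) = (pdom f) ×ˢ (pdom g) := by
  ext x
  simp only [pdom, Set.mem_setOf_eq, Set.mem_prod]
  cases hf : f x.1 <;> cases hg : g x.2 <;> simp [pprod, hf, hg]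

variable [Mul S] [Mul T] [IsLeftCancelMul S] [IsLeftCancelMul T]

instance : IsLeftCancelMul (S × T) :=
  ⟨fun a b c h => by
    obtain ⟨h1, h2⟩ := Prod.ext_iff.1 h
    exact Prod.ext (mul_left_cancel h1) (mul_left_cancel h2)⟩

lemma pblock_pprod (p : (S × T) × (S × T)) :
    pblock p = pprod (pblock (p.1.1, p.2.1)) (pblock (p.1.2, p.2.2)) := by
  apply pext
  intro x y
  rw [show pblock p = pblock (p.1, p.2) from rfl, pblock_some_iff, pprod_eq_some,
    pblock_some_iff, pblock_some_iff, Prod.ext_iff]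
  simp

lemma pfoldl_pprod (l : List ((S × T) × (S × T))) :
    pfoldl l = pprod (pfoldl (l.map fun p => (p.1.1, p.2.1)))
      (pfoldl (l.map fun p => (p.1.2, p.2.2))) := by
  induction l with
  | nil => exact pid_pprod
  | cons p l ih =>
    rw [pfoldl_cons, ih, List.map_cons, List.map_cons, pfoldl_cons, pfoldl_cons,
      pblock_pprod, pcomp_pprod]

lemma InInvHull.decomp {H : S × T → Option (S × T)} (hH : InInvHull H) :
    ∃ (f : S → Option S) (g : T → Option T),
      InInvHull f ∧ InInvHull g ∧ H = pprod f g := by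
  obtain ⟨l, hl, rfl⟩ := hH
  exact ⟨_, _, ⟨_, by simpa using hl, rfl⟩, ⟨_, by simpa using hl, rfl⟩, pfoldl_pprod l⟩

lemma IsConstructible.decompProd {Z : Set (S × T)} (hZ : IsConstructible Z) :
    ∃ (A : Set S) (B : Set T), IsConstructible A ∧ IsConstructible B ∧ Z = A ×ˢ B := by
  obtain ⟨H, hH, rfl⟩ := hZ
  obtain ⟨f, g, hf, hg, rfl⟩ := hH.decomp
  exact ⟨pdom f, pdom g, ⟨f, hf, rfl⟩, ⟨g, hg, rfl⟩, pdom_pprod f g⟩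

end Product

section ProductMonoid

variable {S T : Type*} [Monoid S] [Monoid T] [IsLeftCancelMul S] [IsLeftCancelMul T]

lemma pblock_one {M : Type*} [Monoid M] [IsLeftCancelMul M] :
    pblock ((1 : M), (1 : M)) = pid := by
  apply pext
  intro x y
  rw [pblock_some_iff]
  simp only [one_mul, SgC.pid, Option.some.injEq]
  exact eq_comm

lemma pfoldl_ones {M : Type*} [Monoid M] [IsLeftCancelMul M] (l : List (M × M))
    (hl : ∀ p ∈ l, p = (1, 1)) : pfoldl l = pid := by
  induction l with
  | nil => rfl
  | cons p l ih =>
    rw [pfoldl_cons, hl p (by simp), pblock_one, ih fun q hq => hl q (by simp [hq])]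
    simp

lemma InInvHull.pid' {M : Type*} [Monoid M] [IsLeftCancelMul M] :
    InInvHull (pid : M → Option M) := by
  refine ⟨[((1 : M), (1 : M))], by simp, ?_⟩
  have h : pfoldl [((1 : M), (1 : M))] = SgC.pid := by
    rw [show pfoldl [((1 : M), (1 : M))] = SgC.pcomp (pblock (1, 1)) SgC.pid from rfl,
      pblock_one]
    exact pcomp_pid_right _
  exact h.symm

lemma InInvHull.pprodLeft {f : S → Option S} (hf : InInvHull f) :
    InInvHull (pprod f (pid : T → Option T)) := by
  obtain ⟨l, hl, rfl⟩ := hf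
  refine ⟨l.map fun p => ((p.1, 1), (p.2, 1)), by simpa using hl, ?_⟩
  have h2 := pfoldl_pprod (l.map fun p => ((p.1, (1 : T)), (p.2, (1 : T))))
  rw [List.map_map, List.map_map] at h2
  have e1 : ((fun p : (S × T) × (S × T) => (p.1.1, p.2.1)) ∘
      fun p : S × S => ((p.1, (1 : T)), (p.2, (1 : T)))) = id := by funext p; rfl
  have e2 : ((fun p : (S × T) × (S × T) => (p.1.2, p.2.2)) ∘
      fun p : S × S => ((p.1, (1 : T)), (p.2, (1 : T)))) = fun _ => ((1:T),(1:T)) := by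
    funext p; rfl
  rw [e1, e2, List.map_id] at h2
  rw [pfoldl_ones (l.map fun _ => ((1:T),(1:T)))
    (by intro p hp; simp only [List.mem_map] at hp; obtain ⟨q, -, rfl⟩ := hp; rfl)] at h2
  exact h2.symm

lemma InInvHull.pprodRight {g : T → Option T} (hg : InInvHull g) :
    InInvHull (pprod (pid : S → Option S) g) := by
  obtain ⟨l, hl, rfl⟩ := hg
  refine ⟨l.map fun p => (((1 : S), p.1), ((1 : S), p.2)), by simpa using hl, ?_⟩
  have h2 := pfoldl_pprod (l.map fun p => (((1 : S), p.1), ((1 : S), p.2)))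
  rw [List.map_map, List.map_map] at h2
  have e1 : ((fun p : (S × T) × (S × T) => (p.1.1, p.2.1)) ∘
      fun p : T × T => (((1 : S), p.1), ((1 : S), p.2))) = fun _ => ((1:S),(1:S)) := by
    funext p; rfl
  have e2 : ((fun p : (S × T) × (S × T) => (p.1.2, p.2.2)) ∘
      fun p : T × T => (((1 : S), p.1), ((1 : S), p.2))) = id := by funext p; rfl
  rw [e1, e2, List.map_id] at h2
  rw [pfoldl_ones (l.map fun _ => ((1:S),(1:S)))
    (by intro p hp; simp only [List.mem_map] at hp; obtain ⟨q, -, rfl⟩ := hp; rfl)] at h2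
  exact h2.symm

lemma InInvHull.pprod {f : S → Option S} {g : T → Option T}
    (hf : InInvHull f) (hg : InInvHull g) : InInvHull (SgC.pprod f g) := by
  have h : SgC.pprod f g = SgC.pcomp (SgC.pprod f SgC.pid) (SgC.pprod SgC.pid g) := by
    rw [pcomp_pprod]
    simp
  rw [h]
  exact InInvHull.pcomp (InInvHull.pprodRight hg) (InInvHull.pprodLeft hf)

@[simp] lemma pdom_pid {M : Type*} : pdom (pid : M → Option M) = Set.univ := by
  ext s; simp [pdom, pid]

lemma IsConstructible.prod {A : Set S} {B : Set T}
    (hA : IsConstructible A) (hB : IsConstructible B) : IsConstructible (A ×ˢ B) := by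
  obtain ⟨f, hf, rfl⟩ := hA
  obtain ⟨g, hg, rfl⟩ := hB
  exact ⟨SgC.pprod f g, hf.pprod hg, (pdom_pprod f g).symm⟩

end ProductMonoid

/-! ### Regularity plumbing -/


section Plumbing

variable {M : Type*} [Monoid M]

lemma list_iUnion_eq (As : List (Set M)) :
    ⋃ i : Fin As.length, As.get i = ⋃ A ∈ As, A := by
  ext x
  simp only [Set.mem_iUnion, exists_prop]
  constructor
  · rintro ⟨i, hi⟩
    exact ⟨As.get i, List.get_mem _ _, hi⟩
  · rintro ⟨A, hA, hx⟩
    obtain ⟨i, rfl⟩ := List.mem_iff_get.1 hA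
    exact ⟨i, hx⟩

lemma sr_finset (HR : StronglyRegular M) {n : ℕ}
    (h : Fin n → M → Option M) (hh : ∀ k, InInvHull (h k)) (K : Finset (Fin n))
    (C : Set M) (As : List (Set M)) (hC : IsConstructible C)
    (hAs : ∀ A ∈ As, IsConstructible A)
    (hne : (C \ ⋃ A ∈ As, A).Nonempty)
    (hcov : ∀ s ∈ C \ ⋃ A ∈ As, A, ∃ k ∈ K, h k s = some s) :
    ∃ L : List (Set M × Fin n),
      (∀ p ∈ L, IsConstructible p.1 ∧ p.2 ∈ K ∧ PFixes (h p.2) p.1) ∧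
      ∀ s ∈ C \ ⋃ A ∈ As, A, ∃ p ∈ L, s ∈ p.1 := by
  obtain ⟨s₀, hs₀⟩ := hne
  obtain ⟨k₀, hk₀, -⟩ := hcov s₀ hs₀
  set ρ : Fin n → Fin n := fun k => if k ∈ K then k else k₀ with hρdef
  have hρ : ∀ k, ρ k ∈ K := by
    intro k
    by_cases hk : k ∈ K <;> simp [hρdef, hk, hk₀]
  have hdiff : C \ ⋃ i : Fin As.length, As.get i = C \ ⋃ A ∈ As, A := by
    rw [list_iUnion_eq]
  obtain ⟨l, Y, kk, hY, hYcov, hYfix⟩ :=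
    HR n (fun k => h (ρ k)) (fun k => hh (ρ k)) As.length C (fun i => As.get i) hC
      (fun i => hAs _ (List.get_mem _ _))
      (by rw [hdiff]; exact ⟨s₀, hs₀⟩)
      (by
        rw [hdiff]
        intro s hs
        obtain ⟨k, hk, hfix⟩ := hcov s hs
        refine Set.mem_iUnion.2 ⟨k, ?_⟩
        have : ρ k = k := by simp [hρdef, hk]
        simp only [Set.mem_setOf_eq, this]
        exact hfix)
  refine ⟨(List.finRange l).map fun j => (Y j, ρ (kk j)), ?_, ?_⟩
  · intro p hp
    simp only [List.mem_map, List.mem_finRange, true_and] at hp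
    obtain ⟨j, rfl⟩ := hp
    exact ⟨hY j, hρ _, hYfix j⟩
  · intro s hs
    rw [← hdiff] at hs
    obtain ⟨j, hj⟩ := Set.mem_iUnion.1 (hYcov hs)
    exact ⟨(Y j, ρ (kk j)), List.mem_map.2 ⟨j, List.mem_finRange j, rfl⟩, hj⟩

/-- Existence of a good finite cover. -/
def CoverExists {n : ℕ} (h : Fin n → M → Option M) (D : Set M) : Prop :=
  ∃ L : List (Set M × Fin n),
    (∀ p ∈ L, IsConstructible p.1 ∧ PFixes (h p.2) p.1) ∧
    ∀ s ∈ D, ∃ p ∈ L, s ∈ p.1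

lemma CoverExists.mono {n : ℕ} {h : Fin n → M → Option M} {D D' : Set M}
    (hsub : D' ⊆ D) (hD : CoverExists h D) : CoverExists h D' := by
  obtain ⟨L, h1, h2⟩ := hD
  exact ⟨L, h1, fun s hs => h2 s (hsub hs)⟩

lemma CoverExists.union {n : ℕ} {h : Fin n → M → Option M} {D D' : Set M}
    (hD : CoverExists h D) (hD' : CoverExists h D') : CoverExists h (D ∪ D') := by
  obtain ⟨L, h1, h2⟩ := hD
  obtain ⟨L', h1', h2'⟩ := hD'
  refine ⟨L ++ L', ?_, ?_⟩
  · intro p hp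
    rcases List.mem_append.1 hp with hp | hp
    · exact h1 p hp
    · exact h1' p hp
  · intro s hs
    rcases hs with hs | hs
    · obtain ⟨p, hp, hsp⟩ := h2 s hs
      exact ⟨p, List.mem_append.2 (Or.inl hp), hsp⟩
    · obtain ⟨p, hp, hsp⟩ := h2' s hs
      exact ⟨p, List.mem_append.2 (Or.inr hp), hsp⟩

lemma CoverExists.empty {n : ℕ} {h : Fin n → M → Option M} : CoverExists h (∅ : Set M) :=
  ⟨[], by simp, by simp⟩

lemma CoverExists.biUnion {n : ℕ} {h : Fin n → M → Option M} {ι : Type*}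
    (s : Finset ι) (f : ι → Set M) (H : ∀ i ∈ s, CoverExists h (f i)) :
    CoverExists h (⋃ i ∈ s, f i) := by
  classical
  induction s using Finset.induction_on with
  | empty => simpa using CoverExists.empty
  | @insert a s ha ih =>
    rw [Finset.set_biUnion_insert]
    exact (H a (Finset.mem_insert_self a s)).union
      (ih fun i hi => H i (Finset.mem_insert_of_mem hi))

lemma CoverExists.conclusion {n : ℕ} {h : Fin n → M → Option M} {D : Set M}
    (hD : CoverExists h D) :
    ∃ (l : ℕ) (Y : Fin l → Set M) (kk : Fin l → Fin n),
      (∀ j, IsConstructible (Y j)) ∧ D ⊆ ⋃ j, Y j ∧ ∀ j, PFixes (h (kk j)) (Y j) := by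
  obtain ⟨L, h1, h2⟩ := hD
  refine ⟨L.length, fun j => (L.get j).1, fun j => (L.get j).2, ?_, ?_, ?_⟩
  · exact fun j => (h1 _ (List.get_mem _ _)).1
  · intro s hs
    obtain ⟨p, hp, hsp⟩ := h2 s hs
    obtain ⟨i, rfl⟩ := List.mem_iff_get.1 hp
    exact Set.mem_iUnion.2 ⟨i, hsp⟩
  · exact fun j => (h1 _ (List.get_mem _ _)).2

lemma IsConstructible.finsetInter [IsLeftCancelMul M] {ι : Type*} (A : Set M) (hA : IsConstructible A)
    (J : Finset ι) (Ai : ι → Set M) (hAi : ∀ i ∈ J, IsConstructible (Ai i)) :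
    IsConstructible (A ∩ ⋂ i ∈ J, Ai i) := by
  classical
  induction J using Finset.induction_on with
  | empty => simpa using hA
  | @insert a s ha ih =>
    rw [Finset.set_biInter_insert]
    have e : A ∩ (Ai a ∩ ⋂ i ∈ s, Ai i) = (A ∩ ⋂ i ∈ s, Ai i) ∩ Ai a := by
      ext x
      simp only [Set.mem_inter_iff]
      tauto
    rw [e]
    exact (ih fun i hi => hAi i (Finset.mem_insert_of_mem hi)).inter
      (hAi a (Finset.mem_insert_self a s))

end Plumbing

/-! ### Core covering lemma for products -/

lemma core_cover {S T : Type*} [Monoid S] [Monoid T] [IsLeftCancelMul S] [IsLeftCancelMul T]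
    (HS : StronglyRegular S) (HT : StronglyRegular T) {n : ℕ}
    (f : Fin n → S → Option S) (g : Fin n → T → Option T)
    (hf : ∀ k, InInvHull (f k)) (hg : ∀ k, InInvHull (g k))
    (C : Set S) (As : List (Set S)) (hC : IsConstructible C)
    (hAs : ∀ A ∈ As, IsConstructible A)
    (C' : Set T) (Bs : List (Set T)) (hC' : IsConstructible C')
    (hBs : ∀ B ∈ Bs, IsConstructible B)
    (hWne : (C \ ⋃ A ∈ As, A).Nonempty) (hEne : (C' \ ⋃ B ∈ Bs, B).Nonempty)
    (hcross : ∀ s ∈ C \ ⋃ A ∈ As, A, ∀ t ∈ C' \ ⋃ B ∈ Bs, B,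
      ∃ k, f k s = some s ∧ g k t = some t) :
    ∃ L : List (Set S × Set T × Fin n),
      (∀ p ∈ L, IsConstructible p.1 ∧ IsConstructible p.2.1 ∧
        PFixes (f p.2.2) p.1 ∧ PFixes (g p.2.2) p.2.1) ∧
      ∀ s ∈ C \ ⋃ A ∈ As, A, ∀ t ∈ C' \ ⋃ B ∈ Bs, B,
        ∃ p ∈ L, s ∈ p.1 ∧ t ∈ p.2.1 := by
  classical
  set W := C \ ⋃ A ∈ As, A with hW
  set E := C' \ ⋃ B ∈ Bs, B with hE
  -- S-side covers, one for each subset of indices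
  have keyS : ∃ SCov : List (Set S × Fin n),
      (∀ p ∈ SCov, IsConstructible p.1 ∧ PFixes (f p.2) p.1) ∧
      ∀ K : Finset (Fin n), (∀ s ∈ W, ∃ k ∈ K, f k s = some s) →
        ∀ s ∈ W, ∃ p ∈ SCov, s ∈ p.1 ∧ p.2 ∈ K := by
    have hch : ∀ K : Finset (Fin n), ∃ LK : List (Set S × Fin n),
        (∀ p ∈ LK, IsConstructible p.1 ∧ p.2 ∈ K ∧ PFixes (f p.2) p.1) ∧
        ((∀ s ∈ W, ∃ k ∈ K, f k s = some s) → ∀ s ∈ W, ∃ p ∈ LK, s ∈ p.1) := by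
      intro K
      by_cases hyp : ∀ s ∈ W, ∃ k ∈ K, f k s = some s
      · obtain ⟨L, h1, h2⟩ := sr_finset HS f hf K C As hC hAs hWne hyp
        exact ⟨L, h1, fun _ => h2⟩
      · exact ⟨[], by simp, fun h => absurd h hyp⟩
    choose LK hLK1 hLK2 using hch
    refine ⟨(Finset.univ : Finset (Finset (Fin n))).toList.flatMap LK, ?_, ?_⟩
    · intro p hp
      obtain ⟨K, -, hpK⟩ := List.mem_flatMap.1 hp
      exact ⟨(hLK1 K p hpK).1, (hLK1 K p hpK).2.2⟩
    · intro K hyp s hs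
      obtain ⟨p, hp, hsp⟩ := hLK2 K hyp s hs
      exact ⟨p, List.mem_flatMap.2 ⟨K, Finset.mem_toList.2 (Finset.mem_univ K), hp⟩,
        hsp, (hLK1 K p hp).2.1⟩
  -- T-side covers
  have keyT : ∃ TCov : List (Set T × Fin n),
      (∀ q ∈ TCov, IsConstructible q.1 ∧ PFixes (g q.2) q.1) ∧
      ∀ K : Finset (Fin n), (∀ t ∈ E, ∃ k ∈ K, g k t = some t) →
        ∀ t ∈ E, ∃ q ∈ TCov, t ∈ q.1 ∧ q.2 ∈ K := by
    have hch : ∀ K : Finset (Fin n), ∃ LK : List (Set T × Fin n),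
        (∀ q ∈ LK, IsConstructible q.1 ∧ q.2 ∈ K ∧ PFixes (g q.2) q.1) ∧
        ((∀ t ∈ E, ∃ k ∈ K, g k t = some t) → ∀ t ∈ E, ∃ q ∈ LK, t ∈ q.1) := by
      intro K
      by_cases hyp : ∀ t ∈ E, ∃ k ∈ K, g k t = some t
      · obtain ⟨L, h1, h2⟩ := sr_finset HT g hg K C' Bs hC' hBs hEne hyp
        exact ⟨L, h1, fun _ => h2⟩
      · exact ⟨[], by simp, fun h => absurd h hyp⟩
    choose LK hLK1 hLK2 using hch
    refine ⟨(Finset.univ : Finset (Finset (Fin n))).toList.flatMap LK, ?_, ?_⟩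
    · intro q hq
      obtain ⟨K, -, hqK⟩ := List.mem_flatMap.1 hq
      exact ⟨(hLK1 K q hqK).1, (hLK1 K q hqK).2.2⟩
    · intro K hyp t ht
      obtain ⟨q, hq, htq⟩ := hLK2 K hyp t ht
      exact ⟨q, List.mem_flatMap.2 ⟨K, Finset.mem_toList.2 (Finset.mem_univ K), hq⟩,
        htq, (hLK1 K q hq).2.1⟩
  obtain ⟨SCov, hSa, hSb⟩ := keyS
  obtain ⟨TCov, hTa, hTb⟩ := keyT
  -- matched products
  refine ⟨SCov.flatMap fun p => TCov.flatMap fun q =>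
      if q.2 = p.2 then [(p.1, q.1, p.2)] else [], ?_, ?_⟩
  · intro r hr
    obtain ⟨p, hp, hr2⟩ := List.mem_flatMap.1 hr
    obtain ⟨q, hq, hr3⟩ := List.mem_flatMap.1 hr2
    split_ifs at hr3 with heq
    · simp only [List.mem_singleton] at hr3
      subst hr3
      exact ⟨(hSa p hp).1, (hTa q hq).1, (hSa p hp).2, heq ▸ (hTa q hq).2⟩
    · simp at hr3
  · intro s hs t ht
    -- the set of indices available for s through SCov
    set Λ : Finset (Fin n) :=
      Finset.univ.filter (fun k => ∃ p ∈ SCov, s ∈ p.1 ∧ p.2 = k) with hΛ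
    have hΛvalid : ∀ t' ∈ E, ∃ k ∈ Λ, g k t' = some t' := by
      intro t' ht'
      have hLt : ∀ s' ∈ W, ∃ k ∈ Finset.univ.filter (fun k => g k t' = some t'),
          f k s' = some s' := by
        intro s' hs'
        obtain ⟨k, hk1, hk2⟩ := hcross s' hs' t' ht'
        exact ⟨k, Finset.mem_filter.2 ⟨Finset.mem_univ _, hk2⟩, hk1⟩
      obtain ⟨p, hp, hsp, hpK⟩ := hSb _ hLt s hs
      exact ⟨p.2, Finset.mem_filter.2 ⟨Finset.mem_univ _, ⟨p, hp, hsp, rfl⟩⟩,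
        (Finset.mem_filter.1 hpK).2⟩
    obtain ⟨q, hq, htq, hqΛ⟩ := hTb Λ hΛvalid t ht
    obtain ⟨p, hp, hsp, hpq⟩ := (Finset.mem_filter.1 hqΛ).2
    refine ⟨(p.1, q.1, p.2), ?_, hsp, htq⟩
    refine List.mem_flatMap.2 ⟨p, hp, List.mem_flatMap.2 ⟨q, hq, ?_⟩⟩
    rw [if_pos hpq.symm]
    simp

/-! ### The two directions -/

section Main

variable {S T : Type*} [Monoid S] [Monoid T] [IsLeftCancelMul S] [IsLeftCancelMul T]

lemma isConstructible_univ {M : Type*} [Monoid M] [IsLeftCancelMul M] :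
    IsConstructible (Set.univ : Set M) :=
  ⟨pid, InInvHull.pid', pdom_pid.symm⟩

lemma forward_left (HP : StronglyRegular (S × T)) : StronglyRegular S := by
  intro n h hh m X Xi hX hXi hne hcov
  have hdiff : (X ×ˢ (Set.univ : Set T)) \ ⋃ i, (Xi i ×ˢ (Set.univ : Set T))
      = (X \ ⋃ i, Xi i) ×ˢ (Set.univ : Set T) := by
    ext ⟨s, t⟩
    simp only [Set.mem_diff, Set.mem_prod, Set.mem_iUnion, not_exists, Set.mem_univ,
      and_true, true_and]
  obtain ⟨s₀, hs₀⟩ := hne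
  obtain ⟨l, Y, kk, hY, hYcov, hYfix⟩ := HP n (fun k => pprod (h k) pid)
    (fun k => (hh k).pprodLeft) m
    (X ×ˢ Set.univ) (fun i => Xi i ×ˢ Set.univ) (hX.prod isConstructible_univ)
    (fun i => (hXi i).prod isConstructible_univ)
    (by rw [hdiff]; exact ⟨(s₀, 1), hs₀, Set.mem_univ _⟩)
    (by
      rw [hdiff]
      rintro ⟨s, t⟩ ⟨hsX, -⟩
      obtain ⟨k, hk⟩ := Set.mem_iUnion.1 (hcov hsX)
      exact Set.mem_iUnion.2
        ⟨k, show pprod (h k) pid (s, t) = some (s, t) from pprod_eq_some.2 ⟨hk, rfl⟩⟩)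
  choose P Q hP hQ hPQ using fun j => (hY j).decompProd
  refine CoverExists.conclusion
    ⟨(List.finRange l).flatMap fun j => if (1 : T) ∈ Q j then [(P j, kk j)] else [], ?_, ?_⟩
  · intro p hp
    obtain ⟨j, -, hpj⟩ := List.mem_flatMap.1 hp
    split_ifs at hpj with h1
    · simp only [List.mem_singleton] at hpj
      subst hpj
      refine ⟨hP j, ?_⟩
      intro s hs
      have hmem : (s, (1 : T)) ∈ Y j := by rw [hPQ j]; exact ⟨hs, h1⟩
      exact (pprod_eq_some.1 (hYfix j _ hmem)).1
    · simp at hpj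
  · intro s hs
    have hmem : (s, (1 : T)) ∈ (X ×ˢ (Set.univ : Set T)) \ ⋃ i, (Xi i ×ˢ (Set.univ : Set T)) := by
      rw [hdiff]; exact ⟨hs, Set.mem_univ _⟩
    obtain ⟨j, hj⟩ := Set.mem_iUnion.1 (hYcov hmem)
    rw [hPQ j] at hj
    exact ⟨(P j, kk j), List.mem_flatMap.2 ⟨j, List.mem_finRange j, by rw [if_pos hj.2]; simp⟩,
      hj.1⟩

lemma forward_right (HP : StronglyRegular (S × T)) : StronglyRegular T := by
  intro n h hh m X Xi hX hXi hne hcov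
  have hdiff : ((Set.univ : Set S) ×ˢ X) \ ⋃ i, ((Set.univ : Set S) ×ˢ Xi i)
      = (Set.univ : Set S) ×ˢ (X \ ⋃ i, Xi i) := by
    ext ⟨s, t⟩
    simp only [Set.mem_diff, Set.mem_prod, Set.mem_iUnion, not_exists, Set.mem_univ,
      and_true, true_and]
  obtain ⟨t₀, ht₀⟩ := hne
  obtain ⟨l, Y, kk, hY, hYcov, hYfix⟩ := HP n (fun k => pprod pid (h k))
    (fun k => (hh k).pprodRight) m
    (Set.univ ×ˢ X) (fun i => Set.univ ×ˢ Xi i) (isConstructible_univ.prod hX)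
    (fun i => isConstructible_univ.prod (hXi i))
    (by rw [hdiff]; exact ⟨(1, t₀), Set.mem_univ _, ht₀⟩)
    (by
      rw [hdiff]
      rintro ⟨s, t⟩ ⟨-, htX⟩
      obtain ⟨k, hk⟩ := Set.mem_iUnion.1 (hcov htX)
      exact Set.mem_iUnion.2
        ⟨k, show pprod pid (h k) (s, t) = some (s, t) from pprod_eq_some.2 ⟨rfl, hk⟩⟩)
  choose P Q hP hQ hPQ using fun j => (hY j).decompProd
  refine CoverExists.conclusion
    ⟨(List.finRange l).flatMap fun j => if (1 : S) ∈ P j then [(Q j, kk j)] else [], ?_, ?_⟩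
  · intro p hp
    obtain ⟨j, -, hpj⟩ := List.mem_flatMap.1 hp
    split_ifs at hpj with h1
    · simp only [List.mem_singleton] at hpj
      subst hpj
      refine ⟨hQ j, ?_⟩
      intro t ht
      have hmem : ((1 : S), t) ∈ Y j := by rw [hPQ j]; exact ⟨h1, ht⟩
      exact (pprod_eq_some.1 (hYfix j _ hmem)).2
    · simp at hpj
  · intro t ht
    have hmem : ((1 : S), t) ∈ ((Set.univ : Set S) ×ˢ X) \ ⋃ i, ((Set.univ : Set S) ×ˢ Xi i) := by
      rw [hdiff]; exact ⟨Set.mem_univ _, ht⟩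
    obtain ⟨j, hj⟩ := Set.mem_iUnion.1 (hYcov hmem)
    rw [hPQ j] at hj
    exact ⟨(Q j, kk j), List.mem_flatMap.2 ⟨j, List.mem_finRange j, by rw [if_pos hj.1]; simp⟩,
      hj.2⟩

lemma map_toList_iUnion {ι M : Type*} (J : Finset ι) (A : ι → Set M) :
    (⋃ A' ∈ J.toList.map A, A') = ⋃ i ∈ J, A i := by
  ext x
  simp only [Set.mem_iUnion, exists_prop, List.mem_map, Finset.mem_toList]
  constructor
  · rintro ⟨A', ⟨i, hi, rfl⟩, hx⟩
    exact ⟨i, hi, hx⟩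
  · rintro ⟨i, hi, hx⟩
    exact ⟨A i, ⟨i, hi, rfl⟩, hx⟩

lemma backward (HS : StronglyRegular S) (HT : StronglyRegular T) :
    StronglyRegular (S × T) := by
  intro n h hh m X Xi hX hXi hne hcov
  classical
  choose f g hf hg hfg using fun k => (hh k).decomp
  choose A B hA hB hAB using fun i => (hXi i).decompProd
  obtain ⟨A0, B0, hA0, hB0, hX0⟩ := hX.decompProd
  set D := X \ ⋃ i, Xi i with hD
  have hDmem : ∀ x : S × T, x ∈ D ↔
      (x.1 ∈ A0 ∧ x.2 ∈ B0) ∧ ∀ i, ¬(x.1 ∈ A i ∧ x.2 ∈ B i) := by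
    intro x
    rw [hD, hX0]
    simp only [Set.mem_diff, Set.mem_prod, Set.mem_iUnion, not_exists, hAB]
  have hpieceD : ∀ J : Finset (Fin m),
      (((A0 ∩ ⋂ i ∈ J, A i) \ ⋃ A' ∈ Jᶜ.toList.map A, A') ×ˢ
        (B0 \ ⋃ B' ∈ J.toList.map B, B')) ⊆ D := by
    rintro J ⟨s, t⟩ ⟨hsW, htE⟩
    rw [hDmem]
    refine ⟨⟨hsW.1.1, htE.1⟩, ?_⟩
    rintro i ⟨hiA, hiB⟩
    by_cases hiJ : i ∈ J
    · exact htE.2 (by rw [map_toList_iUnion]; exact Set.mem_iUnion₂.2 ⟨i, hiJ, hiB⟩)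
    · exact hsW.2 (by
        rw [map_toList_iUnion]
        exact Set.mem_iUnion₂.2 ⟨i, Finset.mem_compl.2 hiJ, hiA⟩)
  have hDsub : D ⊆ ⋃ J ∈ (Finset.univ : Finset (Finset (Fin m))),
      (((A0 ∩ ⋂ i ∈ J, A i) \ ⋃ A' ∈ Jᶜ.toList.map A, A') ×ˢ
        (B0 \ ⋃ B' ∈ J.toList.map B, B')) := by
    rintro ⟨s, t⟩ hx
    rw [hDmem] at hx
    obtain ⟨⟨hsA0, htB0⟩, hnot⟩ := hx
    refine Set.mem_iUnion₂.2 ⟨Finset.univ.filter (fun i => s ∈ A i), Finset.mem_univ _, ?_, ?_⟩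
    · refine ⟨⟨hsA0, Set.mem_iInter₂.2 fun i hi => (Finset.mem_filter.1 hi).2⟩, ?_⟩
      rw [map_toList_iUnion]
      intro hmem
      obtain ⟨i, hic, hia⟩ := Set.mem_iUnion₂.1 hmem
      exact (Finset.mem_compl.1 hic) (Finset.mem_filter.2 ⟨Finset.mem_univ _, hia⟩)
    · refine ⟨htB0, ?_⟩
      rw [map_toList_iUnion]
      intro hmem
      obtain ⟨i, hiJ, htB⟩ := Set.mem_iUnion₂.1 hmem
      exact hnot i ⟨(Finset.mem_filter.1 hiJ).2, htB⟩
  have hpieces : ∀ J : Finset (Fin m), J ∈ (Finset.univ : Finset (Finset (Fin m))) →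
      CoverExists h
        (((A0 ∩ ⋂ i ∈ J, A i) \ ⋃ A' ∈ Jᶜ.toList.map A, A') ×ˢ
          (B0 \ ⋃ B' ∈ J.toList.map B, B')) := by
    intro J _
    by_cases hWne : ((A0 ∩ ⋂ i ∈ J, A i) \ ⋃ A' ∈ Jᶜ.toList.map A, A').Nonempty
    swap
    · exact CoverExists.mono
        (by rintro ⟨s, t⟩ ⟨h1, -⟩; exact (hWne ⟨s, h1⟩).elim) CoverExists.empty
    by_cases hEne : (B0 \ ⋃ B' ∈ J.toList.map B, B').Nonempty
    swap
    · exact CoverExists.mono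
        (by rintro ⟨s, t⟩ ⟨-, h2⟩; exact (hEne ⟨t, h2⟩).elim) CoverExists.empty
    obtain ⟨L, hL1, hL2⟩ := core_cover HS HT f g hf hg (A0 ∩ ⋂ i ∈ J, A i)
      (Jᶜ.toList.map A)
      (IsConstructible.finsetInter A0 hA0 J A fun i _ => hA i)
      (by
        intro A' hA'
        obtain ⟨i, -, rfl⟩ := List.mem_map.1 hA'
        exact hA i)
      B0 (J.toList.map B) hB0
      (by
        intro B' hB'
        obtain ⟨i, -, rfl⟩ := List.mem_map.1 hB'
        exact hB i)
      hWne hEne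
      (by
        intro s hsW t htE
        have hxD : (s, t) ∈ D := hpieceD J ⟨hsW, htE⟩
        obtain ⟨k, hk⟩ := Set.mem_iUnion.1 (hcov hxD)
        have hk' : h k (s, t) = some (s, t) := hk
        rw [hfg k] at hk'
        obtain ⟨h1, h2⟩ := pprod_eq_some.1 hk'
        exact ⟨k, h1, h2⟩)
    refine ⟨L.map fun p => (p.1 ×ˢ p.2.1, p.2.2), ?_, ?_⟩
    · intro r hr
      obtain ⟨p, hp, rfl⟩ := List.mem_map.1 hr
      obtain ⟨hc1, hc2, hfx, hgx⟩ := hL1 p hp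
      refine ⟨hc1.prod hc2, ?_⟩
      rintro ⟨s, t⟩ ⟨hs1, ht1⟩
      show h p.2.2 (s, t) = some (s, t)
      rw [hfg p.2.2]
      exact pprod_eq_some.2 ⟨hfx s hs1, hgx t ht1⟩
    · rintro ⟨s, t⟩ ⟨hs1, ht1⟩
      obtain ⟨p, hp, hsp, htp⟩ := hL2 s hs1 t ht1
      exact ⟨(p.1 ×ˢ p.2.1, p.2.2), List.mem_map.2 ⟨p, hp, rfl⟩, hsp, htp⟩
  exact CoverExists.conclusion
    (CoverExists.mono hDsub (CoverExists.biUnion Finset.univ _ hpieces))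

end Main


/-- The direct product of two left cancellative monoids is strongly
C*-regular if and only if both factors are. -/
theorem cstar_stmt5 {S T : Type*} [Monoid S] [Monoid T]
    [IsLeftCancelMul S] [IsLeftCancelMul T] :
    StronglyRegular (S × T) ↔ (StronglyRegular S ∧ StronglyRegular T) := by
  constructor
  · intro HP
    exact ⟨forward_left HP, forward_right HP⟩
  · rintro ⟨HS, HT⟩
    exact backward HS HT

end SgC
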